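/- Let S be an abstract semigroup, x ∈ S, and let e, f ∈ S be idempotents such that x^n lies in the unit group of the monoid eSe for some integer n ≥ 1 and x^m lies in the unit group of the monoid fSf for some integer m ≥ 1. Then e = f. In other words, for each x ∈ S there is at most one idempotent e such that some positive power of x lies in the unit group of eSe. -/
import Mathlib


/-- `spow x n = x^(n+1)`, the `(n+1)`-st power of `x` in a semigroup; it ranges over all
positive powers of `x` as `n` ranges over `ℕ`. -/
def spow {S : Type*} [Mul S] (x : S) : ℕ → S
  | 0 => x
  | n + 1 => spow x n * x

/-- `unitGrpMem e t` says that `t` lies in the unit group of the monoid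
`eSe = {eye : y ∈ S}` (whose identity element is the idempotent `e`): `t ∈ eSe` and there
is `y ∈ eSe` with `t * y = y * t = e`. -/
def unitGrpMem {S : Type*} [Mul S] (e t : S) : Prop :=
  (∃ s, t = e * s * e) ∧ ∃ y, (∃ s, y = e * s * e) ∧ t * y = e ∧ y * t = e

private lemma absorb_left {S : Type*} [Semigroup S] {e t : S} (he : e * e = e)
    (h : ∃ s, t = e * s * e) : e * t = t := by
  obtain ⟨s, rfl⟩ := h
  rw [← mul_assoc, ← mul_assoc, he]

private lemma absorb_right {S : Type*} [Semigroup S] {e t : S} (he : e * e = e)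
    (h : ∃ s, t = e * s * e) : t * e = t := by
  obtain ⟨s, rfl⟩ := h
  rw [mul_assoc, he]

private lemma spow_add {S : Type*} [Semigroup S] (x : S) (n m : ℕ) :
    spow x n * spow x m = spow x (n + m + 1) := by
  induction m with
  | zero => rfl
  | succ m ih =>
      show spow x n * (spow x m * x) = spow x (n + m + 1) * x
      rw [← mul_assoc, ih]

private lemma unit_mul {S : Type*} [Semigroup S] {e a b : S} (he : e * e = e)
    (ha : unitGrpMem e a) (hb : unitGrpMem e b) : unitGrpMem e (a * b) := by
  obtain ⟨⟨s, hs⟩, y, hy, hay, hya⟩ := ha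
  obtain ⟨⟨s', hs'⟩, z, hz, hbz, hzb⟩ := hb
  refine ⟨⟨s * e * e * s', by rw [hs, hs']; simp only [mul_assoc]⟩, z * y, 
    ⟨?_, ?_, ?_⟩⟩
  · obtain ⟨u, rfl⟩ := hz
    obtain ⟨v, rfl⟩ := hy
    exact ⟨u * e * e * v, by simp only [mul_assoc]⟩
  · have : a * b * (z * y) = a * (b * z) * y := by simp only [mul_assoc]
    rw [this, hbz, absorb_right he ⟨s, hs⟩, hay]
  · have : z * y * (a * b) = z * (y * a) * b := by simp only [mul_assoc]
    rw [this, hya, absorb_right he hz, hzb]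

private lemma unit_spow {S : Type*} [Semigroup S] {e t : S} (he : e * e = e)
    (h : unitGrpMem e t) (k : ℕ) : unitGrpMem e (spow t k) := by
  induction k with
  | zero => exact h
  | succ k ih => exact unit_mul he ih h

private lemma spow_spow {S : Type*} [Semigroup S] (x : S) (n k : ℕ) :
    spow (spow x n) k = spow x (k * n + k + n) := by
  induction k with
  | zero => show spow x n = _; norm_num
  | succ k ih =>
      show spow (spow x n) k * spow x n = _
      rw [ih, spow_add]
      congr 1
      ring

/-- Let `S` be an abstract semigroup, `x ∈ S`, and let `e, f` be idempotents of `S` such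
that some positive power of `x` lies in the unit group of `eSe` and some positive power of
`x` lies in the unit group of `fSf`.  Then `e = f`: there is at most one such idempotent. -/
theorem stmt_7 {S : Type*} [Semigroup S] (x e f : S)
    (he : e * e = e) (hf : f * f = f)
    (hne : ∃ n : ℕ, unitGrpMem e (spow x n))
    (hnf : ∃ m : ℕ, unitGrpMem f (spow x m)) :
    e = f := by
  obtain ⟨n, hn⟩ := hne
  obtain ⟨m, hm⟩ := hnf
  have hE : unitGrpMem e (spow x (m * n + m + n)) := by
    have := unit_spow he hn m; rwa [spow_spow] at this
  have hF : unitGrpMem f (spow x (m * n + m + n)) := by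
    have := unit_spow hf hm n
    rw [spow_spow] at this
    have hidx : n * m + n + m = m * n + m + n := by ring
    rwa [hidx] at this
  set T := spow x (m * n + m + n) with hT
  obtain ⟨hTe, y, hy, hTy, hyT⟩ := hE
  obtain ⟨hTf, z, hz, hTz, hzT⟩ := hF
  have h1 : e * f = f := by
    calc e * f = e * (T * z) := by rw [hTz]
    _ = (e * T) * z := by rw [mul_assoc]
    _ = T * z := by rw [absorb_left he hTe]
    _ = f := hTz
  have h2 : e * f = e := by
    calc e * f = (y * T) * f := by rw [hyT]
    _ = y * (T * f) := by rw [mul_assoc]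
    _ = y * T := by rw [absorb_right hf hTf]
    _ = e := hyT
  rw [← h1, h2]
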